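/- For any N points x₁,…,x_N in ℝⁿ with pairwise distances all at most 1 (diameter at most 1), the sum ∑_{i<j} |x_i − x_j|² is at most N²·n/(2(n+1)). -/

import Mathlib

open Finset

noncomputable section WitsAux

variable {n N : ℕ}

/-- The quadratic form of squared distances. -/
def witsB (x : Fin N → EuclideanSpace ℝ (Fin n)) (u v : Fin N → ℝ) : ℝ :=
  ∑ i, ∑ j, u i * v j * dist (x i) (x j) ^ 2

lemma witsB_comm (x : Fin N → EuclideanSpace ℝ (Fin n)) (u v : Fin N → ℝ) :
    witsB x u v = witsB x v u := by
  unfold witsB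
  rw [Finset.sum_comm]
  refine Finset.sum_congr rfl fun i _ => Finset.sum_congr rfl fun j _ => ?_
  rw [dist_comm]; ring

lemma witsB_expand (x : Fin N → EuclideanSpace ℝ (Fin n)) (w μ : Fin N → ℝ) (t : ℝ) :
    witsB x (fun i => w i + t * μ i) (fun i => w i + t * μ i)
      = witsB x w w + 2 * t * witsB x w μ + t ^ 2 * witsB x μ μ := by
  have h : ∀ i j : Fin N, (w i + t * μ i) * (w j + t * μ j) * dist (x i) (x j) ^ 2
      = w i * w j * dist (x i) (x j) ^ 2 + t * (w i * μ j * dist (x i) (x j) ^ 2)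
        + t * (μ i * w j * dist (x i) (x j) ^ 2)
        + t ^ 2 * (μ i * μ j * dist (x i) (x j) ^ 2) := fun i j => by ring
  unfold witsB
  simp_rw [h, Finset.sum_add_distrib, ← Finset.mul_sum]
  have := witsB_comm x μ w
  unfold witsB at this
  rw [this]; ring

lemma witsB_null (x : Fin N → EuclideanSpace ℝ (Fin n)) (μ : Fin N → ℝ)
    (h0 : ∑ i, μ i = 0) (hx : ∑ i, μ i • x i = 0) : witsB x μ μ = 0 := by
  have hD : ∀ i j : Fin N, dist (x i) (x j) ^ 2
      = ‖x i‖ ^ 2 + ‖x j‖ ^ 2 - 2 * (inner ℝ (x i) (x j) : ℝ) := by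
    intro i j
    rw [dist_eq_norm, @norm_sub_sq_real]; ring
  have hInner : ∑ i, ∑ j, μ i * μ j * (inner ℝ (x i) (x j) : ℝ)
      = (inner ℝ (∑ i, μ i • x i) (∑ j, μ j • x j) : ℝ) := by
    rw [sum_inner]
    refine Finset.sum_congr rfl fun i _ => ?_
    rw [inner_sum]
    refine Finset.sum_congr rfl fun j _ => ?_
    rw [real_inner_smul_left, real_inner_smul_right]; ring
  have h1 : ∀ i j : Fin N, μ i * μ j * (‖x i‖ ^ 2 + ‖x j‖ ^ 2 - 2 * (inner ℝ (x i) (x j) : ℝ))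
      = (μ i * ‖x i‖ ^ 2) * μ j + μ i * (μ j * ‖x j‖ ^ 2)
        - 2 * (μ i * μ j * (inner ℝ (x i) (x j) : ℝ)) := fun i j => by ring
  unfold witsB
  simp_rw [hD, h1, Finset.sum_sub_distrib, Finset.sum_add_distrib, ← Finset.mul_sum,
    ← Finset.sum_mul]
  rw [h0, hInner, hx, inner_zero_left]
  simp


lemma witsB_neg_right (x : Fin N → EuclideanSpace ℝ (Fin n)) (u v : Fin N → ℝ) :
    witsB x u (fun i => -v i) = -witsB x u v := by
  unfold witsB
  rw [← Finset.sum_neg_distrib]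
  refine Finset.sum_congr rfl fun i _ => ?_
  rw [← Finset.sum_neg_distrib]
  refine Finset.sum_congr rfl fun j _ => ?_
  ring

lemma wits_exists_small (x : Fin N → EuclideanSpace ℝ (Fin n)) :
    ∀ k : ℕ, ∀ w : Fin N → ℝ, (Finset.univ.filter fun i => w i ≠ 0).card = k →
      (∀ i, 0 ≤ w i) → ∑ i, w i = 1 →
      ∃ w' : Fin N → ℝ, (∀ i, 0 ≤ w' i) ∧ ∑ i, w' i = 1 ∧
        (Finset.univ.filter fun i => w' i ≠ 0).card ≤ n + 1 ∧ witsB x w w ≤ witsB x w' w' := by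
  intro k
  induction k using Nat.strong_induction_on with
  | _ k ih =>
  intro w hcard hpos hsum
  by_cases hk : k ≤ n + 1
  · exact ⟨w, hpos, hsum, hcard ▸ hk, le_refl _⟩
  push_neg at hk
  set T : Finset (Fin N) := Finset.univ.filter fun i => w i ≠ 0 with hT
  have hfin : Module.finrank ℝ (ℝ × EuclideanSpace ℝ (Fin n)) = 1 + n := by
    rw [Module.finrank_prod, Module.finrank_self, finrank_euclideanSpace_fin]
  have hdep : ¬ LinearIndependent ℝ (fun i : ↥T => ((1 : ℝ), x i.1)) := by
    intro h
    have h2 := h.fintype_card_le_finrank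
    rw [hfin, Fintype.card_coe, hcard] at h2
    omega
  obtain ⟨g, hg0, i0, hgi0⟩ := Fintype.not_linearIndependent_iff.mp hdep
  have hg1 : ∑ i : ↥T, g i = 0 := by
    have h2 := congrArg Prod.fst hg0
    simpa [Prod.fst_sum] using h2
  have hg2 : ∑ i : ↥T, g i • x i.1 = 0 := by
    have h2 := congrArg Prod.snd hg0
    simpa [Prod.snd_sum] using h2
  set μ : Fin N → ℝ := fun i => if h : i ∈ T then g ⟨i, h⟩ else 0 with hμ
  have hμT : ∀ i, i ∉ T → μ i = 0 := fun i h => dif_neg h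
  have hμsum : ∑ i, μ i = 0 := by
    rw [← Finset.sum_subset (Finset.subset_univ T) (fun i _ hi => hμT i hi),
      ← Finset.sum_coe_sort T μ, ← hg1]
    refine Finset.sum_congr rfl fun i _ => ?_
    simp [hμ, i.2]
  have hμx : ∑ i, μ i • x i = 0 := by
    rw [← Finset.sum_subset (Finset.subset_univ T)
      (fun i _ hi => by rw [hμT i hi, zero_smul]),
      ← Finset.sum_coe_sort T (fun i => μ i • x i), ← hg2]
    refine Finset.sum_congr rfl fun i _ => ?_
    simp [hμ, i.2]
  have hμi0 : μ i0.1 ≠ 0 := by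
    simpa [hμ, i0.2] using hgi0
  obtain ⟨ν, hν0, hνx, hνT, hνi0, hνc⟩ : ∃ ν : Fin N → ℝ, (∑ i, ν i = 0) ∧
      (∑ i, ν i • x i = 0) ∧ (∀ i, i ∉ T → ν i = 0) ∧ ν i0.1 ≠ 0 ∧ 0 ≤ witsB x w ν := by
    rcases le_or_gt 0 (witsB x w μ) with hc | hc
    · exact ⟨μ, hμsum, hμx, hμT, hμi0, hc⟩
    · refine ⟨fun i => -μ i, by simp [hμsum], by simp [hμx], fun i hi => by simp [hμT i hi],
        by simpa using hμi0, ?_⟩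
      rw [witsB_neg_right]
      linarith
  have hSne : (Finset.univ.filter fun j => ν j < 0).Nonempty := by
    by_contra h
    rw [Finset.not_nonempty_iff_eq_empty, Finset.filter_eq_empty_iff] at h
    have hnn : ∀ j : Fin N, 0 ≤ ν j := fun j => le_of_not_gt (h (Finset.mem_univ j))
    have := (Finset.sum_eq_zero_iff_of_nonneg (fun j _ => hnn j)).mp hν0 i0.1 (Finset.mem_univ _)
    exact hνi0 this
  obtain ⟨j0, hj0mem, hj0min⟩ :=
    Finset.exists_min_image (Finset.univ.filter fun j => ν j < 0) (fun j => w j / (-ν j)) hSne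
  have hνj0 : ν j0 < 0 := (Finset.mem_filter.mp hj0mem).2
  have hj0T : j0 ∈ T := by
    by_contra h
    exact absurd (hνT j0 h) (ne_of_lt hνj0)
  have hwj0 : 0 < w j0 := by
    have := (Finset.mem_filter.mp hj0T).2
    exact lt_of_le_of_ne (hpos j0) (Ne.symm this)
  set t : ℝ := w j0 / (-ν j0) with htdef
  have ht : 0 ≤ t := div_nonneg hwj0.le (by linarith)
  set w' : Fin N → ℝ := fun i => w i + t * ν i with hw'
  have hw'pos : ∀ i, 0 ≤ w' i := by
    intro i
    rcases le_or_gt 0 (ν i) with hνi | hνi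
    · have : 0 ≤ t * ν i := mul_nonneg ht hνi
      simp only [hw']
      linarith [hpos i]
    · have hmem : i ∈ Finset.univ.filter fun j => ν j < 0 :=
        Finset.mem_filter.mpr ⟨Finset.mem_univ i, hνi⟩
      have h2 := hj0min i hmem
      have h3 : t * (-ν i) ≤ w i := (le_div_iff₀ (by linarith)).mp h2
      have h4 : t * (-ν i) = -(t * ν i) := by ring
      simp only [hw']
      linarith
  have hw'sum : ∑ i, w' i = 1 := by
    simp only [hw']
    rw [Finset.sum_add_distrib, ← Finset.mul_sum, hν0, hsum]
    ring
  have hw'j0 : w' j0 = 0 := by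
    have hne : ν j0 ≠ 0 := ne_of_lt hνj0
    have h5 : t * ν j0 = -w j0 := by
      rw [htdef, div_neg, neg_mul, div_mul_cancel₀ _ hne]
    simp only [hw']
    linarith
  have hsub : (Finset.univ.filter fun i => w' i ≠ 0) ⊆ T.erase j0 := by
    intro i hi
    have hi2 : w' i ≠ 0 := (Finset.mem_filter.mp hi).2
    refine Finset.mem_erase.mpr ⟨?_, ?_⟩
    · rintro rfl; exact hi2 hw'j0
    · by_contra h
      have h1 : w i = 0 := by
        by_contra hw0
        exact h (Finset.mem_filter.mpr ⟨Finset.mem_univ i, hw0⟩)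
      have h2 : ν i = 0 := hνT i h
      apply hi2
      simp only [hw']
      rw [h1, h2]; ring
  have hcard' : (Finset.univ.filter fun i => w' i ≠ 0).card < k := by
    have h1 := Finset.card_le_card hsub
    have h2 : (T.erase j0).card < T.card := Finset.card_erase_lt_of_mem hj0T
    rw [hcard] at h2
    omega
  obtain ⟨w'', hp, hs, hc, hB⟩ := ih _ hcard' w' rfl hw'pos hw'sum
  refine ⟨w'', hp, hs, hc, le_trans ?_ hB⟩
  rw [hw', witsB_expand x w ν t, witsB_null x ν hν0 hνx]
  nlinarith [mul_nonneg ht hνc]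

end WitsAux

theorem witsenhausen (n N : ℕ) (x : Fin N → EuclideanSpace ℝ (Fin n))
    (hdiam : ∀ i j, dist (x i) (x j) ≤ 1) :
    (∑ i : Fin N, ∑ j : Fin N, if i < j then dist (x i) (x j) ^ 2 else 0) ≤
      (N : ℝ) ^ 2 * n / (2 * (n + 1)) := by
  rcases Nat.eq_zero_or_pos N with hN | hN
  · subst hN
    simp
  have hNR : (0 : ℝ) < N := by exact_mod_cast hN
  set w : Fin N → ℝ := fun _ => 1 / N with hw
  have hpos : ∀ i, 0 ≤ w i := fun i => by positivity
  have hsum : ∑ i, w i = 1 := by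
    simp only [hw, Finset.sum_const, Finset.card_univ, Fintype.card_fin, nsmul_eq_mul]
    field_simp
  obtain ⟨w', hp, hs, hc, hB⟩ := wits_exists_small x _ w rfl hpos hsum
  set G := ∑ i : Fin N, ∑ j : Fin N, if i < j then dist (x i) (x j) ^ 2 else 0 with hG
  have hsplit : ∀ i j : Fin N, dist (x i) (x j) ^ 2
      = (if i < j then dist (x i) (x j) ^ 2 else 0)
        + (if j < i then dist (x i) (x j) ^ 2 else 0) := by
    intro i j
    rcases lt_trichotomy i j with h | h | h
    · simp [h, asymm h]
    · subst h; simp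
    · simp [h, asymm h, not_lt.mpr h.le]
  have h2G : ∑ i : Fin N, ∑ j : Fin N, dist (x i) (x j) ^ 2 = 2 * G := by
    have hA : ∑ i : Fin N, ∑ j : Fin N, (if j < i then dist (x i) (x j) ^ 2 else 0) = G := by
      rw [Finset.sum_comm, hG]
      refine Finset.sum_congr rfl fun j _ => Finset.sum_congr rfl fun i _ => ?_
      rw [dist_comm]
    calc ∑ i : Fin N, ∑ j : Fin N, dist (x i) (x j) ^ 2
        = ∑ i : Fin N, ∑ j : Fin N, ((if i < j then dist (x i) (x j) ^ 2 else 0)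
            + (if j < i then dist (x i) (x j) ^ 2 else 0)) := by
          exact Finset.sum_congr rfl fun i _ => Finset.sum_congr rfl fun j _ => hsplit i j
      _ = G + ∑ i : Fin N, ∑ j : Fin N, (if j < i then dist (x i) (x j) ^ 2 else 0) := by
          simp_rw [Finset.sum_add_distrib]; rw [hG]
      _ = 2 * G := by rw [hA]; ring
  have hBw : witsB x w w = 2 * G / (N : ℝ) ^ 2 := by
    have h1 : ∀ i j : Fin N, w i * w j * dist (x i) (x j) ^ 2
        = (1 / (N : ℝ) ^ 2) * dist (x i) (x j) ^ 2 := by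
      intro i j
      simp only [hw]
      ring
    unfold witsB
    simp_rw [h1, ← Finset.mul_sum]
    rw [h2G]
    field_simp
  have hub : witsB x w' w' ≤ 1 - ∑ i, (w' i) ^ 2 := by
    have step1 : witsB x w' w'
        ≤ ∑ i : Fin N, ∑ j : Fin N, (w' i * w' j - if j = i then w' i * w' j else 0) := by
      refine Finset.sum_le_sum fun i _ => Finset.sum_le_sum fun j _ => ?_
      rcases eq_or_ne j i with rfl | hij
      · simp
      · have hd := hdiam i j
        have hd2 : dist (x i) (x j) ^ 2 ≤ 1 := by
          nlinarith [dist_nonneg (x := x i) (y := x j)]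
        have hmn := mul_nonneg (hp i) (hp j)
        simp only [hij, if_false]
        nlinarith
    have step2 : ∑ i : Fin N, ∑ j : Fin N, (w' i * w' j - if j = i then w' i * w' j else 0)
        = 1 - ∑ i, (w' i) ^ 2 := by
      have h1 : ∀ i : Fin N, ∑ j : Fin N, (w' i * w' j - if j = i then w' i * w' j else 0)
          = w' i - (w' i) ^ 2 := by
        intro i
        rw [Finset.sum_sub_distrib, ← Finset.mul_sum, hs,
          Finset.sum_ite_eq' Finset.univ i (fun j => w' i * w' j)]
        simp
        ring
      simp_rw [h1]
      rw [Finset.sum_sub_distrib, hs]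
    calc witsB x w' w' ≤ _ := step1
      _ = 1 - ∑ i, (w' i) ^ 2 := step2
  have hlow : 1 ≤ ((n : ℝ) + 1) * ∑ i, (w' i) ^ 2 := by
    set S : Finset (Fin N) := Finset.univ.filter fun i => w' i ≠ 0 with hS
    have h1 : ∑ i ∈ S, w' i = 1 := by
      rw [Finset.sum_subset (Finset.subset_univ S)
        (fun i _ hi => by simpa [hS] using hi), hs]
    have h2 := sq_sum_le_card_mul_sum_sq (s := S) (f := w')
    rw [h1, one_pow] at h2
    have h3 : ∑ i ∈ S, (w' i) ^ 2 ≤ ∑ i, (w' i) ^ 2 :=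
      Finset.sum_le_sum_of_subset_of_nonneg (Finset.subset_univ S)
        (fun i _ _ => sq_nonneg _)
    have h4 : (S.card : ℝ) ≤ (n : ℝ) + 1 := by exact_mod_cast hc
    have h5 : 0 ≤ ∑ i ∈ S, (w' i) ^ 2 := Finset.sum_nonneg fun i _ => sq_nonneg _
    nlinarith
  have hchain : 2 * G / (N : ℝ) ^ 2 ≤ 1 - ∑ i, (w' i) ^ 2 := by
    rw [← hBw]; exact le_trans hB hub
  have hN2 : (0 : ℝ) < (N : ℝ) ^ 2 := by positivity
  have h2Gle : 2 * G ≤ (N : ℝ) ^ 2 * (1 - ∑ i, (w' i) ^ 2) := by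
    have h6 := mul_le_mul_of_nonneg_right hchain hN2.le
    rw [div_mul_cancel₀ _ hN2.ne'] at h6
    linarith
  rw [le_div_iff₀ (by positivity : (0 : ℝ) < 2 * ((n : ℝ) + 1))]
  nlinarith [mul_le_mul_of_nonneg_right h2Gle (show (0 : ℝ) ≤ (n : ℝ) + 1 by positivity),
    mul_le_mul_of_nonneg_left hlow hN2.le]
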